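/- (Closed-form solution, full-rank case) Let λ ∈ ℝ^N with λ_n > 0 for all n, let c ∈ ℝ^N with c_n ≥ 0 for all n and c ≠ 0, and let ε > 0 with ε² < ∑_{n=1}^N c_n². Let k > 0 be the unique solution of ∑_{n=1}^N (c_n k / (2λ_n + k))² = ε², set μ = (∑_{n=1}^N 2λ_n c_n² / (2λ_n + k)²)⁻¹, and define u⋆ ∈ ℝ^N by u⋆_n = μ c_n / (2λ_n + k). Then u⋆ is the unique global minimizer of ∑_{n=1}^N λ_n u_n² over {u ∈ ℝ^N : ∑_{n=1}^N c_n u_n ≥ ε‖u‖₂ + 1}, and u⋆_n ≥ 0 for all n. -/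

import Mathlib

/-- closed-form solution, full-rank case: with `λ > 0`, `c ≥ 0`,
`c ≠ 0`, `0 < ε`, `ε² < ∑ c_n²`, `k > 0` solving the secular equation,
`μ = (∑ 2λ_n c_n²/(2λ_n+k)²)⁻¹` and `u⋆_n = μ c_n/(2λ_n + k)`, the vector `u⋆`
is the unique global minimizer of `∑ λ_n u_n²` over
`{u : ∑ c_n u_n ≥ ε‖u‖₂ + 1}`, and `u⋆ ≥ 0`. -/
theorem rab_closed_form_full_rank (N : ℕ)
    (lam c : Fin N → ℝ) (hlam : ∀ n, 0 < lam n) (hc : ∀ n, 0 ≤ c n) (hc0 : c ≠ 0)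
    (ε : ℝ) (hε : 0 < ε) (hεsum : ε ^ 2 < ∑ n, (c n) ^ 2)
    (k : ℝ) (hk : 0 < k)
    (hsec : ∑ n, (c n * k / (2 * lam n + k)) ^ 2 = ε ^ 2)
    (μ : ℝ) (hμ : μ = (∑ n, 2 * lam n * (c n) ^ 2 / (2 * lam n + k) ^ 2)⁻¹)
    (ustar : Fin N → ℝ) (hustar : ∀ n, ustar n = μ * c n / (2 * lam n + k)) :
    (ε * Real.sqrt (∑ n, (ustar n) ^ 2) + 1 ≤ ∑ n, c n * ustar n) ∧
    (∀ u : Fin N → ℝ, ε * Real.sqrt (∑ n, (u n) ^ 2) + 1 ≤ ∑ n, c n * u n →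
      ∑ n, lam n * (ustar n) ^ 2 ≤ ∑ n, lam n * (u n) ^ 2) ∧
    (∀ u : Fin N → ℝ, ε * Real.sqrt (∑ n, (u n) ^ 2) + 1 ≤ ∑ n, c n * u n →
      (∀ v : Fin N → ℝ, ε * Real.sqrt (∑ n, (v n) ^ 2) + 1 ≤ ∑ n, c n * v n →
        ∑ n, lam n * (u n) ^ 2 ≤ ∑ n, lam n * (v n) ^ 2) → u = ustar) ∧
    (∀ n, 0 ≤ ustar n) := by
  have h2lk : ∀ n, (0:ℝ) < 2 * lam n + k := fun n => by have := hlam n; linarith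
  set S2 : ℝ := ∑ n, (c n) ^ 2 / (2 * lam n + k) ^ 2 with hS2def
  set D : ℝ := ∑ n, 2 * lam n * (c n) ^ 2 / (2 * lam n + k) ^ 2 with hDdef
  have hS2nonneg : 0 ≤ S2 :=
    Finset.sum_nonneg fun n _ => div_nonneg (sq_nonneg _) (sq_nonneg _)
  have hDpos : 0 < D := by
    obtain ⟨m, hm⟩ := Function.ne_iff.mp hc0
    have hm' : c m ≠ 0 := by simpa using hm
    have hcm : 0 < c m := lt_of_le_of_ne (hc m) (Ne.symm hm')
    refine Finset.sum_pos' (fun n _ => ?_) ⟨m, Finset.mem_univ m, ?_⟩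
    · exact div_nonneg
        (mul_nonneg (mul_nonneg (by norm_num) (hlam n).le) (sq_nonneg _)) (sq_nonneg _)
    · exact div_pos (mul_pos (by linarith [hlam m]) (pow_pos hcm 2)) (pow_pos (h2lk m) 2)
  have hμpos : 0 < μ := by rw [hμ]; exact inv_pos.mpr hDpos
  have hμD : μ * D = 1 := by rw [hμ]; exact inv_mul_cancel₀ hDpos.ne'
  -- secular equation rewritten
  have hε2 : ε ^ 2 = k ^ 2 * S2 := by
    rw [← hsec, hS2def, Finset.mul_sum]
    refine Finset.sum_congr rfl fun n _ => ?_
    field_simp [(h2lk n).ne']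
  have hεval : ε = k * Real.sqrt S2 := by
    have h1 : ε = Real.sqrt (ε ^ 2) := (Real.sqrt_sq hε.le).symm
    rw [h1, hε2, Real.sqrt_mul (sq_nonneg k), Real.sqrt_sq hk.le]
  -- norm of ustar
  have hust2 : ∑ n, (ustar n) ^ 2 = μ ^ 2 * S2 := by
    rw [hS2def, Finset.mul_sum]
    refine Finset.sum_congr rfl fun n _ => ?_
    rw [hustar n]
    field_simp [(h2lk n).ne']
  have hnorm : Real.sqrt (∑ n, (ustar n) ^ 2) = μ * Real.sqrt S2 := by
    rw [hust2, Real.sqrt_mul (sq_nonneg μ), Real.sqrt_sq hμpos.le]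
  -- value of constraint at ustar
  have hS1 : ∑ n, (c n) ^ 2 / (2 * lam n + k) = D + k * S2 := by
    rw [hDdef, hS2def, Finset.mul_sum, ← Finset.sum_add_distrib]
    refine Finset.sum_congr rfl fun n _ => ?_
    field_simp [(h2lk n).ne']
  have hcu : ∑ n, c n * ustar n = 1 + k * (μ * S2) := by
    have h1 : ∑ n, c n * ustar n = μ * ∑ n, (c n) ^ 2 / (2 * lam n + k) := by
      rw [Finset.mul_sum]
      refine Finset.sum_congr rfl fun n _ => ?_
      rw [hustar n]; ring
    rw [h1, hS1]
    linear_combination hμD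
  have hss : Real.sqrt S2 * Real.sqrt S2 = S2 := Real.mul_self_sqrt hS2nonneg
  have hfeq : ε * Real.sqrt (∑ n, (ustar n) ^ 2) + 1 = ∑ n, c n * ustar n := by
    rw [hεval, hnorm, hcu]
    linear_combination (k * μ) * hss
  -- gradient identity
  have hgrad : ∀ n, 2 * lam n * ustar n = μ * c n - k * ustar n := by
    intro n
    rw [hustar n]
    field_simp [(h2lk n).ne']
    ring
  -- main descent inequality
  have hmain : ∀ u : Fin N → ℝ, ε * Real.sqrt (∑ n, (u n) ^ 2) + 1 ≤ ∑ n, c n * u n →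
      (∑ n, lam n * (ustar n) ^ 2) + (∑ n, lam n * (u n - ustar n) ^ 2)
        ≤ ∑ n, lam n * (u n) ^ 2 := by
    intro u hu
    have hsplit : ∑ n, lam n * (u n) ^ 2
        = (∑ n, lam n * (ustar n) ^ 2) + (∑ n, lam n * (u n - ustar n) ^ 2)
          + ∑ n, (μ * c n - k * ustar n) * (u n - ustar n) := by
      rw [← Finset.sum_add_distrib, ← Finset.sum_add_distrib]
      refine Finset.sum_congr rfl fun n _ => ?_
      rw [← hgrad n]; ring
    have hCS : ∑ n, ustar n * u n
        ≤ Real.sqrt (∑ n, (ustar n) ^ 2) * Real.sqrt (∑ n, (u n) ^ 2) :=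
      Real.sum_mul_le_sqrt_mul_sqrt _ _ _
    set nu : ℝ := Real.sqrt (∑ n, (u n) ^ 2) with hnu
    have hCS' : ∑ n, ustar n * u n ≤ μ * Real.sqrt S2 * nu := by
      rwa [hnorm] at hCS
    have hexpand : ∑ n, (μ * c n - k * ustar n) * (u n - ustar n)
        = μ * (∑ n, c n * u n) - μ * (∑ n, c n * ustar n)
          - k * (∑ n, ustar n * u n) + k * (∑ n, (ustar n) ^ 2) := by
      rw [Finset.mul_sum, Finset.mul_sum, Finset.mul_sum, Finset.mul_sum,
        ← Finset.sum_sub_distrib, ← Finset.sum_sub_distrib, ← Finset.sum_add_distrib]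
      refine Finset.sum_congr rfl fun n _ => by ring
    have hTnonneg : 0 ≤ ∑ n, (μ * c n - k * ustar n) * (u n - ustar n) := by
      rw [hexpand, hcu, hust2]
      have hu' : μ * (ε * nu + 1) ≤ μ * ∑ n, c n * u n :=
        mul_le_mul_of_nonneg_left hu hμpos.le
      rw [hεval] at hu'
      have hCS'' : k * (∑ n, ustar n * u n) ≤ k * (μ * Real.sqrt S2 * nu) :=
        mul_le_mul_of_nonneg_left hCS' hk.le
      linarith [hu', hCS'']
    linarith [hsplit, hTnonneg]
  have hBnonneg : ∀ u : Fin N → ℝ, 0 ≤ ∑ n, lam n * (u n - ustar n) ^ 2 :=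
    fun u => Finset.sum_nonneg fun n _ => mul_nonneg (hlam n).le (sq_nonneg _)
  refine ⟨hfeq.le, fun u hu => ?_, fun u hu hmin => ?_, fun n => ?_⟩
  · have := hmain u hu
    linarith [hBnonneg u]
  · have h1 := hmin ustar hfeq.le
    have h2 := hmain u hu
    have hB0 : ∑ n, lam n * (u n - ustar n) ^ 2 = 0 :=
      le_antisymm (by linarith) (hBnonneg u)
    funext n
    have := (Finset.sum_eq_zero_iff_of_nonneg
      (fun m _ => mul_nonneg (hlam m).le (sq_nonneg (u m - ustar m)))).mp hB0 n
      (Finset.mem_univ n)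
    have hsq : (u n - ustar n) ^ 2 = 0 := by
      rcases mul_eq_zero.mp this with h | h
      · exact absurd h (hlam n).ne'
      · exact h
    have h3 := pow_eq_zero_iff (n := 2) (by norm_num) |>.mp hsq
    exact sub_eq_zero.mp h3
  · rw [hustar n]
    exact div_nonneg (mul_nonneg hμpos.le (hc n)) (h2lk n).le
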